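/- For all n ≥ 1, the complete homogeneous symmetric function satisfies the hook expansion: (qt/(qt−1)) · h_n[((1−qt)/(qt)) x] = −(qt)^{1−n} · Σ_{k=0}^{n−1} (−qt)^k s_{(n−k,1^k)}[x], as an identity of symmetric functions with coefficients in the field ℚ(q,t). -/

import Mathlib

open MvPolynomial Finset

/-- The constant `z_λ = ∏ i^{m_i} · m_i!` attached to a partition. -/
def zPart {n : ℕ} (lam : Nat.Partition n) : ℕ :=
  lam.parts.prod * ∏ i ∈ lam.parts.toFinset, (lam.parts.count i).factorial

/-- The ring of symmetric functions over `K`, modeled as the polynomial ring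
`K[p_1, p_2, …]` in the power sums (`X j` stands for `p_j`). -/
noncomputable abbrev SymFn (K : Type*) [CommRing K] := MvPolynomial ℕ K

/-- The complete homogeneous symmetric function
`h_n = ∑_{λ ⊢ n} z_λ⁻¹ p_λ` in the power-sum presentation. -/
noncomputable def hSym (K : Type*) [Field K] [CharZero K] (n : ℕ) : SymFn K :=
  ∑ lam : Nat.Partition n, ((zPart lam : K))⁻¹ •
    (lam.parts.map fun a => (MvPolynomial.X a : SymFn K)).prod

/-- Extension of `hSym` by zero to negative indices. -/
noncomputable def hSymZ (K : Type*) [Field K] [CharZero K] (r : ℤ) : SymFn K :=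
  if r < 0 then 0 else hSym K r.toNat

/-- The Schur function of the hook `(a,1^k)`, via the Jacobi–Trudi determinant. -/
noncomputable def sHook (K : Type*) [Field K] [CharZero K] (a k : ℕ) : SymFn K :=
  Matrix.det (Matrix.of fun i j : Fin (k + 1) =>
    hSymZ K ((if (i : ℕ) = 0 then (a : ℤ) else 1) - (i : ℕ) + (j : ℕ)))

namespace HookAux

lemma count_mul_sum (s : Multiset ℕ) : ∑ a ∈ s.toFinset, Multiset.count a s * a = s.sum := by
  have h := congrArg Multiset.sum (Multiset.toFinset_sum_count_nsmul_eq s)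
  rw [Multiset.sum_sum] at h
  simpa [Multiset.sum_nsmul, smul_eq_mul] using h

def zM (s : Multiset ℕ) : ℕ := s.prod * ∏ i ∈ s.toFinset, (s.count i).factorial

lemma zPart_eq {n : ℕ} (lam : Nat.Partition n) : zPart lam = zM lam.parts := rfl

lemma zM_pos (s : Multiset ℕ) (hs : ∀ i ∈ s, 0 < i) : 0 < zM s :=
  Nat.mul_pos (Multiset.prod_pos hs) (Finset.prod_pos fun i _ => Nat.factorial_pos _)

lemma zM_cons (a : ℕ) (s : Multiset ℕ) :
    zM (a ::ₘ s) = a * (s.count a + 1) * zM s := by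
  have key : ∏ i ∈ (a ::ₘ s).toFinset, (Multiset.count i (a ::ₘ s)).factorial
      = (s.count a + 1) * ∏ i ∈ s.toFinset, (Multiset.count i s).factorial := by
    by_cases ha : a ∈ s.toFinset
    · rw [Multiset.toFinset_cons, Finset.insert_eq_self.2 ha]
      rw [← Finset.mul_prod_erase _ _ ha, ← Finset.mul_prod_erase _ _ ha]
      have h2 : ∀ i ∈ s.toFinset.erase a,
          (Multiset.count i (a ::ₘ s)).factorial = (Multiset.count i s).factorial := by
        intro i hi
        rw [Multiset.count_cons_of_ne (Finset.ne_of_mem_erase hi)]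
      rw [Finset.prod_congr rfl h2, Multiset.count_cons_self, Nat.factorial_succ]
      ring
    · have hc : s.count a = 0 := Multiset.count_eq_zero.2 (by simpa using ha)
      rw [Multiset.toFinset_cons, Finset.prod_insert ha, Multiset.count_cons_self, hc]
      have h2 : ∀ i ∈ s.toFinset,
          (Multiset.count i (a ::ₘ s)).factorial = (Multiset.count i s).factorial := by
        intro i hi
        rw [Multiset.count_cons_of_ne (by rintro rfl; exact ha hi)]
      rw [Finset.prod_congr rfl h2]
      simp [hc]
  unfold zM
  rw [Multiset.prod_cons, key]
  ring

variable (K : Type*) [Field K] [CharZero K]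

noncomputable def P (s : Multiset ℕ) : SymFn K := (s.map fun a => (X a : SymFn K)).prod

lemma hSym_def' (n : ℕ) : hSym K n = ∑ lam : Nat.Partition n, ((zM lam.parts : K))⁻¹ • P K lam.parts := rfl

lemma zM_ne (s : Multiset ℕ) (hs : ∀ i ∈ s, 0 < i) : (zM s : K) ≠ 0 :=
  Nat.cast_ne_zero.2 (zM_pos s hs).ne'

lemma hSym_zero : hSym K 0 = 1 := by
  rw [hSym_def']
  rw [Fintype.sum_unique]
  have h : (default : Nat.Partition 0).parts = 0 := by
    have := (default : Nat.Partition 0).parts_sum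
    rcases Multiset.empty_or_exists_mem (default : Nat.Partition 0).parts with h | ⟨a, ha⟩
    · exact h
    · exfalso
      have h1 : 0 < a := (default : Nat.Partition 0).parts_pos ha
      have h2 : a ≤ (default : Nat.Partition 0).parts.sum := Multiset.le_sum_of_mem ha
      omega
  rw [h]
  simp [zM, P]

lemma P_cons (a : ℕ) (s : Multiset ℕ) : P K (a ::ₘ s) = X a * P K s := by
  unfold P; rw [Multiset.map_cons, Multiset.prod_cons]

def consPart {n j : ℕ} (hj : 1 ≤ j) (hjn : j ≤ n) (μ : Nat.Partition (n - j)) :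
    Nat.Partition n :=
  ⟨j ::ₘ μ.parts,
   fun hi => by
     rcases Multiset.mem_cons.1 hi with rfl | h
     · exact hj
     · exact μ.parts_pos h,
   by rw [Multiset.sum_cons, μ.parts_sum]; omega⟩

def erasePart {n : ℕ} (lam : Nat.Partition n) (j : ℕ) (hj : j ∈ lam.parts) :
    Nat.Partition (n - j) :=
  ⟨lam.parts.erase j,
   fun hi => lam.parts_pos (Multiset.mem_of_mem_erase hi),
   by have h := Multiset.sum_erase hj; have h2 := lam.parts_sum; omega⟩

lemma newton (n : ℕ) :
    (n : K) • hSym K n = ∑ j ∈ Icc 1 n, X j * hSym K (n - j) := by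
  have hRHS : ∑ j ∈ Icc 1 n, (X j : SymFn K) * hSym K (n - j)
      = ∑ j ∈ Icc 1 n, ∑ μ : Nat.Partition (n - j),
          (zM μ.parts : K)⁻¹ • (X j * P K μ.parts) := by
    refine Finset.sum_congr rfl fun j _ => ?_
    rw [hSym_def', Finset.mul_sum]
    exact Finset.sum_congr rfl fun μ _ => mul_smul_comm _ _ _
  have hLHS : (n : K) • hSym K n
      = ∑ lam : Nat.Partition n, ∑ j ∈ lam.parts.toFinset,
          (((lam.parts.count j * j : ℕ) : K) / zM lam.parts) • P K lam.parts := by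
    rw [hSym_def', Finset.smul_sum]
    refine Finset.sum_congr rfl fun lam _ => ?_
    rw [← Finset.sum_smul, smul_smul, ← Finset.sum_div]
    congr 1
    rw [← Nat.cast_sum, count_mul_sum, lam.parts_sum, div_eq_mul_inv]
  rw [hLHS, hRHS]
  rw [← Finset.sum_sigma (univ : Finset (Nat.Partition n)) (fun lam => lam.parts.toFinset)
      (fun x => (((x.1.parts.count x.2 * x.2 : ℕ) : K) / zM x.1.parts) • P K x.1.parts),
      ← Finset.sum_sigma (Icc 1 n) (fun j => (univ : Finset (Nat.Partition (n - j))))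
      (fun x => (zM x.2.parts : K)⁻¹ • (X x.1 * P K x.2.parts))]
  refine (Finset.sum_bij'
    (i := fun (a : Σ j : ℕ, Nat.Partition (n - j)) (ha) =>
      (⟨consPart (Finset.mem_Icc.1 (Finset.mem_sigma.1 ha).1).1
        (Finset.mem_Icc.1 (Finset.mem_sigma.1 ha).1).2 a.2, a.1⟩ : Σ _ : Nat.Partition n, ℕ))
    (j := fun (b : Σ _ : Nat.Partition n, ℕ) (hb) =>
      (⟨b.2, erasePart b.1 b.2 (Multiset.mem_toFinset.1 (Finset.mem_sigma.1 hb).2)⟩ :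
        Σ j : ℕ, Nat.Partition (n - j)))
    ?_ ?_ ?_ ?_ ?_).symm
  · intro a ha
    refine Finset.mem_sigma.2 ⟨Finset.mem_univ _, ?_⟩
    exact Multiset.mem_toFinset.2 (Multiset.mem_cons_self _ _)
  · intro b hb
    have hmem := Multiset.mem_toFinset.1 (Finset.mem_sigma.1 hb).2
    refine Finset.mem_sigma.2 ⟨Finset.mem_Icc.2 ⟨b.1.parts_pos hmem, ?_⟩, Finset.mem_univ _⟩
    have := Multiset.le_sum_of_mem hmem
    rw [b.1.parts_sum] at this
    exact this
  · rintro ⟨j, μ⟩ ha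
    exact congrArg (Sigma.mk j) (Nat.Partition.ext (Multiset.erase_cons_head j μ.parts))
  · rintro ⟨lam, j⟩ hb
    have hmem := Multiset.mem_toFinset.1 (Finset.mem_sigma.1 hb).2
    exact congrArg (fun l : Nat.Partition n => (⟨l, j⟩ : Σ _ : Nat.Partition n, ℕ))
      (Nat.Partition.ext (Multiset.cons_erase hmem))
  · rintro ⟨j, μ⟩ ha
    have hj1 : 1 ≤ j := (Finset.mem_Icc.1 (Finset.mem_sigma.1 ha).1).1
    show (zM μ.parts : K)⁻¹ • (X j * P K μ.parts) = _
    have hparts : (consPart hj1 (Finset.mem_Icc.1 (Finset.mem_sigma.1 ha).1).2 μ).parts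
        = j ::ₘ μ.parts := rfl
    simp only [hparts, Multiset.count_cons_self, zM_cons, P_cons]
    congr 1
    have hz : (zM μ.parts : K) ≠ 0 := zM_ne K μ.parts (fun i hi => μ.parts_pos hi)
    have hj0 : (j : K) ≠ 0 := Nat.cast_ne_zero.2 (by omega)
    have hc : ((Multiset.count j μ.parts + 1 : ℕ) : K) ≠ 0 := Nat.cast_ne_zero.2 (by omega)
    push_cast at hc ⊢
    rw [eq_div_iff (mul_ne_zero (mul_ne_zero hj0 hc) hz)]
    field_simp

lemma unique_of_rec (c : ℕ → K) (F G : ℕ → SymFn K) (h00 : F 0 = G 0)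
    (hF : ∀ m : ℕ, 1 ≤ m → (m : K) • F m = ∑ j ∈ Icc 1 m, c j • (X j * F (m - j)))
    (hG : ∀ m : ℕ, 1 ≤ m → (m : K) • G m = ∑ j ∈ Icc 1 m, c j • (X j * G (m - j)))
    (n : ℕ) : F n = G n := by
  induction n using Nat.strong_induction_on with
  | _ n ih =>
    rcases Nat.eq_zero_or_pos n with rfl | hn
    · exact h00
    · have hn' : (n : K) ≠ 0 := Nat.cast_ne_zero.2 hn.ne'
      apply smul_right_injective (SymFn K) hn'
      show (n : K) • F n = (n : K) • G n
      rw [hF n hn, hG n hn]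
      refine Finset.sum_congr rfl fun j hj => ?_
      have h1 : 1 ≤ j := (Finset.mem_Icc.1 hj).1
      rw [ih (n - j) (by omega)]

noncomputable def phi (c : ℕ → K) : SymFn K →ₐ[K] SymFn K :=
  aeval (fun j => C (c j) * X j)

lemma phi_X (c : ℕ → K) (j : ℕ) : phi K c (X j) = c j • X j := by
  simp [phi, smul_eq_C_mul]

lemma phi_one' (c : ℕ → K) : phi K c (hSym K 0) = 1 := by
  rw [hSym_zero, map_one]

lemma phi_rec (c : ℕ → K) (n : ℕ) :
    (n : K) • phi K c (hSym K n) = ∑ j ∈ Icc 1 n, c j • (X j * phi K c (hSym K (n - j))) := by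
  have h := congrArg (phi K c) (newton K n)
  rw [map_smul, map_sum] at h
  rw [h]
  refine Finset.sum_congr rfl fun j _ => ?_
  rw [map_mul, phi_X, smul_mul_assoc]

lemma sum_triangle {M : Type*} [AddCommMonoid M] (n : ℕ) (g : ℕ → ℕ → M) :
    ∑ m ∈ range (n + 1), ∑ j ∈ Icc 1 m, g j m = ∑ j ∈ Icc 1 n, ∑ m ∈ Icc j n, g j m := by
  induction n with
  | zero => simp
  | succ n ih =>
    rw [Finset.sum_range_succ, ih]
    conv_rhs => rw [Finset.sum_Icc_succ_top (by omega)]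
    have h1 : ∀ j ∈ Icc 1 n, ∑ m ∈ Icc j (n + 1), g j m
        = (∑ m ∈ Icc j n, g j m) + g j (n + 1) := fun j hj =>
      Finset.sum_Icc_succ_top (by have := (Finset.mem_Icc.1 hj).2; omega) _
    rw [Finset.sum_congr rfl h1, Finset.sum_add_distrib]
    have h2 : ∑ m ∈ Icc (n + 1) (n + 1), g (n + 1) m = g (n + 1) (n + 1) := by simp
    rw [h2, Finset.sum_Icc_succ_top (by omega : 1 ≤ n + 1)]
    abel

lemma sum_triangle' {M : Type*} [AddCommMonoid M] (n : ℕ) (g : ℕ → ℕ → M) :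
    ∑ m ∈ range (n + 1), ∑ j ∈ Icc 1 (n - m), g j m
      = ∑ j ∈ Icc 1 n, ∑ m ∈ range (n - j + 1), g j m := by
  have h1 := Finset.sum_range_reflect (fun m => ∑ j ∈ Icc 1 (n - m), g j m) (n + 1)
  rw [← h1]
  have h2 : ∀ m ∈ range (n + 1), ∑ j ∈ Icc 1 (n - (n + 1 - 1 - m)), g j (n + 1 - 1 - m)
      = ∑ j ∈ Icc 1 m, g j (n - m) := by
    intro m hm
    have hm' : m ≤ n := Nat.lt_succ_iff.1 (Finset.mem_range.1 hm)
    have e1 : n + 1 - 1 - m = n - m := by omega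
    have e2 : n - (n - m) = m := by omega
    rw [e1, e2]
  rw [Finset.sum_congr rfl h2, sum_triangle]
  refine Finset.sum_congr rfl fun j hj => ?_
  have hj1 : 1 ≤ j := (Finset.mem_Icc.1 hj).1
  have hjn : j ≤ n := (Finset.mem_Icc.1 hj).2
  rw [← Finset.Ico_add_one_right_eq_Icc, Finset.sum_Ico_eq_sum_range]
  have e3 : n + 1 - j = n - j + 1 := by omega
  rw [e3]
  have h4 := Finset.sum_range_reflect (fun i => g j i) (n - j + 1)
  rw [← h4]
  refine Finset.sum_congr rfl fun i hi => ?_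
  congr 1
  omega

noncomputable def convF (c d : ℕ → K) (n : ℕ) : SymFn K :=
  ∑ m ∈ range (n + 1), phi K c (hSym K m) * phi K d (hSym K (n - m))

lemma conv_rec (c d : ℕ → K) (n : ℕ) :
    (n : K) • convF K c d n
      = ∑ j ∈ Icc 1 n, (c j + d j) • (X j * convF K c d (n - j)) := by
  unfold convF
  rw [Finset.smul_sum]
  have split : ∀ m ∈ range (n + 1),
      (n : K) • (phi K c (hSym K m) * phi K d (hSym K (n - m)))
      = ((m : K) • phi K c (hSym K m)) * phi K d (hSym K (n - m))
        + phi K c (hSym K m) * (((n - m : ℕ) : K) • phi K d (hSym K (n - m))) := by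
    intro m hm
    have hm' : m ≤ n := Nat.lt_succ_iff.1 (Finset.mem_range.1 hm)
    rw [smul_mul_assoc, mul_smul_comm, ← add_smul]
    congr 1
    have : ((n - m : ℕ) : K) = (n : K) - (m : K) := by
      rw [Nat.cast_sub hm']
    rw [this]; ring
  rw [Finset.sum_congr rfl split, Finset.sum_add_distrib]
  -- first piece
  have piece1 : ∑ m ∈ range (n + 1),
      ((m : K) • phi K c (hSym K m)) * phi K d (hSym K (n - m))
      = ∑ j ∈ Icc 1 n, c j • (X j * convF K c d (n - j)) := by
    have h1 : ∀ m ∈ range (n + 1),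
        ((m : K) • phi K c (hSym K m)) * phi K d (hSym K (n - m))
        = ∑ j ∈ Icc 1 m, (c j • (X j * phi K c (hSym K (m - j)))) * phi K d (hSym K (n - m)) := by
      intro m _
      rw [phi_rec, Finset.sum_mul]
    rw [Finset.sum_congr rfl h1, sum_triangle]
    refine Finset.sum_congr rfl fun j hj => ?_
    obtain ⟨hj1, hjn⟩ := Finset.mem_Icc.1 hj
    rw [← Finset.Ico_add_one_right_eq_Icc, Finset.sum_Ico_eq_sum_range]
    have e3 : n + 1 - j = n - j + 1 := by omega
    rw [e3]
    have h2 : ∀ i ∈ range (n - j + 1),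
        (c j • (X j * phi K c (hSym K (j + i - j)))) * phi K d (hSym K (n - (j + i)))
        = c j • (X j * (phi K c (hSym K i) * phi K d (hSym K (n - j - i)))) := by
      intro i _
      have e4 : j + i - j = i := by omega
      have e5 : n - (j + i) = n - j - i := by omega
      rw [e4, e5, smul_mul_assoc, mul_assoc]
    rw [Finset.sum_congr rfl h2, ← Finset.smul_sum, ← Finset.mul_sum]
    rfl
  -- second piece
  have piece2 : ∑ m ∈ range (n + 1),
      phi K c (hSym K m) * (((n - m : ℕ) : K) • phi K d (hSym K (n - m)))
      = ∑ j ∈ Icc 1 n, d j • (X j * convF K c d (n - j)) := by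
    have h1 : ∀ m ∈ range (n + 1),
        phi K c (hSym K m) * (((n - m : ℕ) : K) • phi K d (hSym K (n - m)))
        = ∑ j ∈ Icc 1 (n - m),
            phi K c (hSym K m) * (d j • (X j * phi K d (hSym K (n - m - j)))) := by
      intro m _
      rw [phi_rec, Finset.mul_sum]
    rw [Finset.sum_congr rfl h1, sum_triangle']
    refine Finset.sum_congr rfl fun j hj => ?_
    obtain ⟨hj1, hjn⟩ := Finset.mem_Icc.1 hj
    have h2 : ∀ m ∈ range (n - j + 1),
        phi K c (hSym K m) * (d j • (X j * phi K d (hSym K (n - m - j))))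
        = d j • (X j * (phi K c (hSym K m) * phi K d (hSym K (n - j - m)))) := by
      intro m _
      have e5 : n - m - j = n - j - m := by omega
      rw [e5, mul_smul_comm]
      refine congrArg (d j • ·) ?_
      ring
    rw [Finset.sum_congr rfl h2, ← Finset.smul_sum, ← Finset.mul_sum]
    rfl
  rw [piece1, piece2, ← Finset.sum_add_distrib]
  refine Finset.sum_congr rfl fun j _ => ?_
  rw [add_smul]
  rfl

lemma conv_eq_phi (c d : ℕ → K) (n : ℕ) :
    convF K c d n = phi K (fun j => c j + d j) (hSym K n) := by
  refine unique_of_rec K (fun j => c j + d j) (convF K c d)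
    (fun m => phi K (fun j => c j + d j) (hSym K m)) ?_ ?_ ?_ n
  · unfold convF
    simp [phi_one', hSym_zero]
  · intro m _
    exact conv_rec K c d m
  · intro m _
    exact phi_rec K _ m

end HookAux

namespace HookAux
variable (K : Type*) [Field K] [CharZero K]

lemma hSymZ_nat (a : ℕ) : hSymZ K (a : ℤ) = hSym K a := by
  unfold hSymZ
  rw [if_neg (by omega), Int.toNat_natCast]

lemma hSymZ_neg {r : ℤ} (h : r < 0) : hSymZ K r = 0 := if_pos h

lemma sHook_zero (a : ℕ) : sHook K a 0 = hSym K a := by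
  unfold sHook
  rw [Matrix.det_fin_one]
  simp [hSymZ_nat]

lemma sHook_rec (a k : ℕ) :
    sHook K a (k + 1) = hSym K a * sHook K 1 k - sHook K (a + 1) k := by
  unfold sHook
  rw [Matrix.det_succ_column_zero, Fin.sum_univ_succ, Fin.sum_univ_succ]
  have hrest : ∀ i : Fin k,
      ((-1 : SymFn K) ^ ((i.succ.succ : Fin (k + 2)) : ℕ) *
        (Matrix.of fun i j : Fin (k + 2) =>
          hSymZ K ((if (i : ℕ) = 0 then (a : ℤ) else 1) - (i : ℕ) + (j : ℕ))) i.succ.succ 0 *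
        (((Matrix.of fun i j : Fin (k + 2) =>
          hSymZ K ((if (i : ℕ) = 0 then (a : ℤ) else 1) - (i : ℕ) + (j : ℕ))).submatrix
            (i.succ.succ : Fin (k + 2)).succAbove Fin.succ).det)) = 0 := by
    intro i
    have hval : ((i.succ.succ : Fin (k + 2)) : ℕ) = (i : ℕ) + 2 := by
      simp [Fin.val_succ]
    have hentry : (Matrix.of fun i j : Fin (k + 2) =>
        hSymZ K ((if (i : ℕ) = 0 then (a : ℤ) else 1) - (i : ℕ) + (j : ℕ))) i.succ.succ 0
        = 0 := by
      simp only [Matrix.of_apply, hval, Fin.val_zero]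
      rw [if_neg (by omega)]
      exact hSymZ_neg K (by push_cast; omega)
    rw [hentry]
    ring
  rw [Finset.sum_congr rfl (fun i _ => hrest i), Finset.sum_const_zero, add_zero]
  have e0 : ((Matrix.of fun i j : Fin (k + 2) =>
      hSymZ K ((if (i : ℕ) = 0 then (a : ℤ) else 1) - (i : ℕ) + (j : ℕ))).submatrix
        (0 : Fin (k + 2)).succAbove Fin.succ)
      = Matrix.of (fun i j : Fin (k + 1) =>
        hSymZ K ((if (i : ℕ) = 0 then ((1 : ℕ) : ℤ) else 1) - (i : ℕ) + (j : ℕ))) := by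
    refine Matrix.ext fun r c => ?_
    simp only [Matrix.submatrix_apply, Matrix.of_apply, Fin.zero_succAbove, Fin.val_succ]
    refine congrArg (hSymZ K) ?_
    split_ifs <;> try contradiction
    all_goals (push_cast; try omega)
  have e1 : ((Matrix.of fun i j : Fin (k + 2) =>
      hSymZ K ((if (i : ℕ) = 0 then (a : ℤ) else 1) - (i : ℕ) + (j : ℕ))).submatrix
        ((0 : Fin (k + 1)).succ : Fin (k + 2)).succAbove Fin.succ)
      = Matrix.of (fun i j : Fin (k + 1) =>
        hSymZ K ((if (i : ℕ) = 0 then ((a + 1 : ℕ) : ℤ) else 1) - (i : ℕ) + (j : ℕ))) := by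
    refine Matrix.ext fun r c => ?_
    induction r using Fin.cases with
    | zero =>
      simp only [Matrix.submatrix_apply, Matrix.of_apply]
      have hsa : ((0 : Fin (k + 1)).succ : Fin (k + 2)).succAbove 0 = 0 := rfl
      rw [hsa]
      simp only [Matrix.of_apply, Fin.val_zero, Fin.val_succ]
      refine congrArg (hSymZ K) ?_
      split_ifs <;> try contradiction
      all_goals (push_cast; try omega)
    | succ r =>
      simp only [Matrix.submatrix_apply, Matrix.of_apply]
      have hsa : ((0 : Fin (k + 1)).succ : Fin (k + 2)).succAbove r.succ = r.succ.succ := by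
        apply Fin.succAbove_of_le_castSucc
        rw [Fin.le_def]
        simp [Fin.val_succ]
      rw [hsa]
      simp only [Matrix.of_apply, Fin.val_succ]
      refine congrArg (hSymZ K) ?_
      split_ifs <;> try contradiction
      all_goals (push_cast; try omega)
  rw [e0, e1]
  have hA00 : (Matrix.of fun i j : Fin (k + 2) =>
      hSymZ K ((if (i : ℕ) = 0 then (a : ℤ) else 1) - (i : ℕ) + (j : ℕ))) 0 0
      = hSym K a := by
    trans hSymZ K ((a : ℕ) : ℤ)
    · simp only [Matrix.of_apply]
      refine congrArg (hSymZ K) ?_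
      split_ifs <;> try contradiction
      all_goals (push_cast; try omega)
    · exact hSymZ_nat K a
  have hA10 : (Matrix.of fun i j : Fin (k + 2) =>
      hSymZ K ((if (i : ℕ) = 0 then (a : ℤ) else 1) - (i : ℕ) + (j : ℕ)))
        ((0 : Fin (k + 1)).succ) 0 = 1 := by
    trans hSymZ K ((0 : ℕ) : ℤ)
    · simp only [Matrix.of_apply]
      refine congrArg (hSymZ K) ?_
      simp only [Fin.val_succ, Fin.val_zero]
      split_ifs <;> try contradiction
      all_goals (push_cast; try omega)
    · rw [hSymZ_nat, hSym_zero]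
  rw [hA00, hA10]
  simp only [Fin.val_zero, Fin.val_succ, pow_zero, pow_one]
  ring

end HookAux

namespace HookAux
variable (K : Type*) [Field K] [CharZero K]

noncomputable def Efun : ℕ → SymFn K
  | 0 => 1
  | (m + 1) => sHook K 1 m

lemma Efun_succ (m : ℕ) : Efun K (m + 1) = sHook K 1 m := rfl

lemma sHook_expand (k : ℕ) : ∀ a : ℕ, sHook K a k
    = ∑ j ∈ range (k + 1), (-1 : K) ^ j • (hSym K (a + j) * Efun K (k - j)) := by
  induction k with
  | zero =>
    intro a
    rw [sHook_zero]
    simp [Efun]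
  | succ k ih =>
    intro a
    rw [sHook_rec, ih (a + 1)]
    conv_rhs => rw [Finset.sum_range_succ']
    have h2 : ∀ i ∈ range (k + 1),
        (-1 : K) ^ (i + 1) • (hSym K (a + (i + 1)) * Efun K (k + 1 - (i + 1)))
        = -((-1 : K) ^ i • (hSym K (a + 1 + i) * Efun K (k - i))) := by
      intro i _
      have e1 : a + (i + 1) = a + 1 + i := by omega
      have e2 : k + 1 - (i + 1) = k - i := by omega
      rw [e1, e2, pow_succ]
      rw [mul_comm ((-1 : K) ^ i) (-1), ← smul_smul]
      simp
    rw [Finset.sum_congr rfl h2, Finset.sum_neg_distrib]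
    simp only [pow_zero, one_smul, add_zero, Nat.sub_zero]
    rw [Efun_succ]
    abel

lemma alt_sum (n : ℕ) (hn : 1 ≤ n) :
    ∑ j ∈ range (n + 1), (-1 : K) ^ j • (hSym K (n - j) * Efun K j) = 0 := by
  obtain ⟨m, rfl⟩ : ∃ m, n = m + 1 := ⟨n - 1, by omega⟩
  rw [Finset.sum_range_succ]
  simp only [Nat.sub_self, hSym_zero, one_mul]
  have hE : Efun K (m + 1)
      = ∑ i ∈ range (m + 1), (-1 : K) ^ (m - i) • (hSym K (m + 1 - i) * Efun K i) := by
    rw [Efun_succ, sHook_expand K m 1]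
    rw [← Finset.sum_range_reflect
      (fun j => (-1 : K) ^ j • (hSym K (1 + j) * Efun K (m - j))) (m + 1)]
    refine Finset.sum_congr rfl fun i hi => ?_
    have hi' : i ≤ m := Nat.lt_succ_iff.1 (Finset.mem_range.1 hi)
    have e1 : m + 1 - 1 - i = m - i := by omega
    have e2 : 1 + (m - i) = m + 1 - i := by omega
    have e3 : m - (m - i) = i := by omega
    rw [e1, e2, e3]
  rw [hE, Finset.smul_sum, ← Finset.sum_add_distrib]
  refine Finset.sum_eq_zero fun j hj => ?_
  have hj' : j ≤ m := Nat.lt_succ_iff.1 (Finset.mem_range.1 hj)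
  rw [smul_smul, ← add_smul]
  have hs : (-1 : K) ^ j + (-1 : K) ^ (m + 1) * (-1 : K) ^ (m - j) = 0 := by
    rw [← pow_add, show (m + 1) + (m - j) = 2 * (m - j) + (j + 1) from by omega,
      pow_add, pow_mul, neg_one_sq, one_pow, pow_succ]
    ring
  rw [hs, zero_smul]

lemma phi_one_fun (p : SymFn K) : phi K (fun _ => (1 : K)) p = p := by
  unfold phi
  have h : (fun j : ℕ => C (1 : K) * X j) = X := by funext j; simp
  rw [h, aeval_X_left, AlgHom.id_apply]

lemma phi_zero_fun (n : ℕ) (hn : 1 ≤ n) : phi K (fun _ => (0 : K)) (hSym K n) = 0 := by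
  have h := unique_of_rec K (fun _ => (0 : K))
    (fun m => phi K (fun _ => (0 : K)) (hSym K m))
    (fun m => if m = 0 then 1 else 0)
    (by simp [phi_one'])
    (fun m _ => phi_rec K _ m)
    (fun m hm => by
      have hm0 : ¬ m = 0 := by omega
      simp [hm0]) n
  rw [h, if_neg (by omega)]

lemma conv_unit (n : ℕ) (hn : 1 ≤ n) :
    ∑ m ∈ range (n + 1), hSym K m * phi K (fun _ => (-1 : K)) (hSym K (n - m)) = 0 := by
  have h : convF K (fun _ => (1 : K)) (fun _ => (-1 : K)) n
      = phi K (fun _ => (1 : K) + (-1 : K)) (hSym K n) := conv_eq_phi K _ _ n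
  have h2 : (fun _ : ℕ => (1 : K) + (-1 : K)) = (fun _ : ℕ => (0 : K)) := by
    funext _; ring
  rw [h2, phi_zero_fun K n hn] at h
  rw [← h]
  unfold convF
  exact Finset.sum_congr rfl fun m _ => by rw [phi_one_fun]

lemma signedE (r : ℕ) :
    phi K (fun _ => (-1 : K)) (hSym K r) = (-1 : K) ^ r • Efun K r := by
  induction r using Nat.strong_induction_on with
  | _ r ih =>
    rcases Nat.eq_zero_or_pos r with rfl | hr
    · rw [phi_one']
      simp [Efun]
    · have h1 := conv_unit K r hr
      have h3 : ∑ m ∈ range (r + 1), hSym K m * ((-1 : K) ^ (r - m) • Efun K (r - m)) = 0 := by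
        have h2 := alt_sum K r hr
        rw [← Finset.sum_range_reflect
          (fun j => (-1 : K) ^ j • (hSym K (r - j) * Efun K j)) (r + 1)] at h2
        rw [← h2]
        refine Finset.sum_congr rfl fun m hm => ?_
        have hm' : m ≤ r := Nat.lt_succ_iff.1 (Finset.mem_range.1 hm)
        have e1 : r + 1 - 1 - m = r - m := by omega
        have e2 : r - (r - m) = m := by omega
        rw [e1, e2, mul_smul_comm]
      rw [Finset.sum_range_succ'] at h1 h3
      simp only [hSym_zero, one_mul, Nat.sub_zero] at h1 h3
      have h4 : ∀ i ∈ range r,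
          hSym K (i + 1) * phi K (fun _ => (-1 : K)) (hSym K (r - (i + 1)))
          = hSym K (i + 1) * ((-1 : K) ^ (r - (i + 1)) • Efun K (r - (i + 1))) := by
        intro i _
        rw [ih _ (by omega)]
      rw [Finset.sum_congr rfl h4] at h1
      rw [eq_neg_of_add_eq_zero_right h1, eq_neg_of_add_eq_zero_right h3]

lemma phi_geom (v : K) (n : ℕ) :
    phi K (fun j => v ^ j) (hSym K n) = v ^ n • hSym K n := by
  refine unique_of_rec K (fun j => v ^ j) _ (fun m => v ^ m • hSym K m) ?_
    (fun m _ => phi_rec K _ m) ?_ n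
  · simp [phi_one', hSym_zero]
  · intro m _
    rw [smul_smul, mul_comm, ← smul_smul, newton, Finset.smul_sum]
    refine Finset.sum_congr rfl fun j hj => ?_
    obtain ⟨hj1, hj2⟩ := Finset.mem_Icc.1 hj
    rw [show v ^ m = v ^ j * v ^ (m - j) from by rw [← pow_add]; congr 1; omega]
    rw [mul_smul, mul_smul_comm]

lemma sum_triangle₀ {M : Type*} [AddCommMonoid M] (n : ℕ) (g : ℕ → ℕ → M) :
    ∑ k ∈ range n, ∑ j ∈ range (k + 1), g j k = ∑ j ∈ range n, ∑ k ∈ Ico j n, g j k := by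
  induction n with
  | zero => simp
  | succ n ih =>
    rw [Finset.sum_range_succ, ih]
    conv_rhs => rw [Finset.sum_range_succ]
    have h1 : ∀ j ∈ range n, ∑ k ∈ Ico j (n + 1), g j k
        = (∑ k ∈ Ico j n, g j k) + g j n := fun j hj =>
      Finset.sum_Ico_succ_top (Finset.mem_range.1 hj).le _
    rw [Finset.sum_congr rfl h1, Finset.sum_add_distrib]
    have h2 : ∑ k ∈ Ico n (n + 1), g n k = g n n := by simp
    rw [h2, Finset.sum_range_succ]
    abel

end HookAux

open HookAux

/-- Hook expansion of the plethystically modified complete homogeneous symmetric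
function (the plethysm `h_n[((1-qt)/(qt))·x]` substitutes `p_j ↦ ((1-(qt)^j)/(qt)^j)·p_j`):
`(qt/(qt-1)) h_n[((1-qt)/(qt)) x] = -(qt)^{1-n} ∑_{k=0}^{n-1} (-qt)^k s_{(n-k,1^k)}`. -/
theorem hook_expansion (K : Type*) [Field K] [CharZero K] (q t : K)
    (h0 : q * t ≠ 0) (h1 : q * t ≠ 1) (n : ℕ) (hn : 1 ≤ n) :
    (q * t / (q * t - 1)) •
        (MvPolynomial.aeval
          (fun j : ℕ => MvPolynomial.C ((1 - (q * t) ^ j) / (q * t) ^ j) *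
            (MvPolynomial.X j : SymFn K)) (hSym K n)) =
      (-((q * t) ^ ((1 : ℤ) - (n : ℤ)))) •
        ∑ k ∈ Finset.range n, (-(q * t)) ^ k • sHook K (n - k) k := by
  set u : K := q * t with hu
  have hu0 : u ≠ 0 := h0
  have hun : ∀ m : ℕ, u ^ m ≠ 0 := fun m => pow_ne_zero m hu0
  have hu1 : u - 1 ≠ 0 := sub_ne_zero.2 h1
  have hfg : (fun j : ℕ => C ((1 - u ^ j) / u ^ j) * (X j : SymFn K))
      = (fun j : ℕ => C ((u⁻¹ : K) ^ j + (-1 : K)) * (X j : SymFn K)) := by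
    funext j
    have hs : (1 - u ^ j) / u ^ j = (u⁻¹) ^ j + (-1 : K) := by
      rw [inv_pow, sub_div, div_self (hun j), one_div]
      ring
    rw [hs]
  have hL1 : (aeval (fun j : ℕ => C ((1 - u ^ j) / u ^ j) * (X j : SymFn K))) (hSym K n)
      = convF K (fun j => (u⁻¹ : K) ^ j) (fun _ => (-1 : K)) n := by
    have hc : convF K (fun j => (u⁻¹ : K) ^ j) (fun _ => (-1 : K)) n
        = phi K (fun j => (u⁻¹ : K) ^ j + (-1 : K)) (hSym K n) := conv_eq_phi K _ _ n
    rw [hc]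
    show _ = (aeval (fun j : ℕ => C ((u⁻¹ : K) ^ j + (-1 : K)) * (X j : SymFn K))) (hSym K n)
    rw [hfg]
  have hL2 : convF K (fun j => (u⁻¹ : K) ^ j) (fun _ => (-1 : K)) n
      = ∑ m ∈ range (n + 1), ((u⁻¹ : K) ^ m * (-1 : K) ^ (n - m)) •
          (hSym K m * Efun K (n - m)) := by
    unfold convF
    refine Finset.sum_congr rfl fun m _ => ?_
    rw [phi_geom, signedE, smul_mul_smul]
  have hL3 : ∑ m ∈ range (n + 1), ((u⁻¹ : K) ^ m * (-1 : K) ^ (n - m)) •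
          (hSym K m * Efun K (n - m))
      = ∑ j ∈ range (n + 1), ((u⁻¹ : K) ^ (n - j) * (-1 : K) ^ j) •
          (hSym K (n - j) * Efun K j) := by
    rw [← Finset.sum_range_reflect (fun m => ((u⁻¹ : K) ^ m * (-1 : K) ^ (n - m)) •
          (hSym K m * Efun K (n - m))) (n + 1)]
    refine Finset.sum_congr rfl fun j hj => ?_
    have hj' : j ≤ n := Nat.lt_succ_iff.1 (Finset.mem_range.1 hj)
    have e1 : n + 1 - 1 - j = n - j := by omega
    have e2 : n - (n - j) = j := by omega
    rw [e1, e2]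
  have hsH : ∀ k ∈ range n, sHook K (n - k) k
      = ∑ j ∈ range (k + 1), (-1 : K) ^ (k - j) • (hSym K (n - j) * Efun K j) := by
    intro k hk
    have hk' : k < n := Finset.mem_range.1 hk
    rw [sHook_expand K k (n - k)]
    rw [← Finset.sum_range_reflect
      (fun j => (-1 : K) ^ j • (hSym K (n - k + j) * Efun K (k - j))) (k + 1)]
    refine Finset.sum_congr rfl fun j hj => ?_
    have hj' : j ≤ k := Nat.lt_succ_iff.1 (Finset.mem_range.1 hj)
    have e1 : k + 1 - 1 - j = k - j := by omega
    have e2 : n - k + (k - j) = n - j := by omega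
    have e3 : k - (k - j) = j := by omega
    rw [e1, e2, e3]
  have hR1 : ∑ k ∈ range n, (-u) ^ k • sHook K (n - k) k
      = ∑ j ∈ range n, ((-1 : K) ^ j * ∑ k ∈ Ico j n, u ^ k) •
          (hSym K (n - j) * Efun K j) := by
    have step1 : ∀ k ∈ range n, (-u) ^ k • sHook K (n - k) k
        = ∑ j ∈ range (k + 1), ((-u) ^ k * (-1 : K) ^ (k - j)) •
            (hSym K (n - j) * Efun K j) := by
      intro k hk
      rw [hsH k hk, Finset.smul_sum]
      exact Finset.sum_congr rfl fun j _ => by rw [smul_smul]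
    rw [Finset.sum_congr rfl step1, sum_triangle₀]
    refine Finset.sum_congr rfl fun j hj => ?_
    rw [← Finset.sum_smul]
    congr 1
    rw [Finset.mul_sum]
    refine Finset.sum_congr rfl fun k hk => ?_
    obtain ⟨hjk, hkn⟩ := Finset.mem_Ico.1 hk
    rw [neg_pow]
    rw [show ((-1 : K)) ^ k * u ^ k * (-1 : K) ^ (k - j)
        = ((-1 : K) ^ k * (-1 : K) ^ (k - j)) * u ^ k from by ring]
    rw [← pow_add, show k + (k - j) = 2 * (k - j) + j from by omega,
      pow_add, pow_mul, neg_one_sq, one_pow, one_mul]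
  have hR2 : ∑ j ∈ range n, ((-1 : K) ^ j * ∑ k ∈ Ico j n, u ^ k) •
          (hSym K (n - j) * Efun K j)
      = ∑ j ∈ range (n + 1), ((-1 : K) ^ j * ∑ k ∈ Ico j n, u ^ k) •
          (hSym K (n - j) * Efun K j) := by
    rw [Finset.sum_range_succ]
    simp
  have hw : (u ^ ((1 : ℤ) - (n : ℤ))) = u / u ^ n := by
    rw [zpow_sub₀ hu0, zpow_one, zpow_natCast]
  have key : ∀ j ∈ range (n + 1),
      (u / (u - 1)) * ((u⁻¹ : K) ^ (n - j) * (-1 : K) ^ j)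
      = (-(u ^ ((1 : ℤ) - (n : ℤ)))) * ((-1 : K) ^ j * ∑ k ∈ Ico j n, u ^ k)
        + (u / (u - 1)) * (-1 : K) ^ j := by
    intro j hj
    have hj' : j ≤ n := Nat.lt_succ_iff.1 (Finset.mem_range.1 hj)
    have hA : u ^ (n - j) ≠ 0 := hun _
    have hB : u ^ j ≠ 0 := hun _
    rw [geom_sum_Ico h1 hj', hw, inv_pow]
    have hAB : u ^ n = u ^ (n - j) * u ^ j := by rw [← pow_add]; congr 1; omega
    rw [hAB]
    field_simp
    ring
  have hzero : ∑ j ∈ range (n + 1), ((u / (u - 1)) * (-1 : K) ^ j) •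
      (hSym K (n - j) * Efun K j) = 0 := by
    have halt := alt_sum K n hn
    have : ∑ j ∈ range (n + 1), ((u / (u - 1)) * (-1 : K) ^ j) •
        (hSym K (n - j) * Efun K j)
        = (u / (u - 1)) • ∑ j ∈ range (n + 1), (-1 : K) ^ j •
            (hSym K (n - j) * Efun K j) := by
      rw [Finset.smul_sum]
      exact Finset.sum_congr rfl fun j _ => by rw [smul_smul]
    rw [this, halt, smul_zero]
  rw [hL1, hL2, hL3, Finset.smul_sum]
  conv_rhs => rw [hR1, hR2, Finset.smul_sum]
  have hterm : ∀ j ∈ range (n + 1),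
      (u / (u - 1)) • (((u⁻¹ : K) ^ (n - j) * (-1 : K) ^ j) • (hSym K (n - j) * Efun K j))
      = (-(u ^ ((1 : ℤ) - (n : ℤ)))) • (((-1 : K) ^ j * ∑ k ∈ Ico j n, u ^ k) •
          (hSym K (n - j) * Efun K j))
        + ((u / (u - 1)) * (-1 : K) ^ j) • (hSym K (n - j) * Efun K j) := by
    intro j hj
    rw [smul_smul, smul_smul, key j hj, add_smul]
  rw [Finset.sum_congr rfl hterm, Finset.sum_add_distrib, hzero, add_zero]
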